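/- The translations between nested sequents and labeled tree sequents are mutually inverse on nested sequents: for every nested sequent Φ, 𝔑(𝔏(Φ)) = Φ. -/

import Mathlib

/-- Nested sequents over formulae `Fml`, variables `Var`, and labels `Lab`:
a nested sequent is a flat sequent `Γ; Θ ⊢ Δ` together with a (possibly empty) list
of labeled children `[Ψ₁]_{w₁}, …, [Ψₘ]_{wₘ}`. -/
inductive Nested (Fml Var Lab : Type) : Type
  | node (Γ : Multiset Fml) (Θ : Multiset Var) (Δ : Multiset Fml)
      (children : List (Lab × Nested Fml Var Lab)) : Nested Fml Var Lab

/-- A labeled sequent: relational atoms `wRu`, domain atoms `x ∈ D(w)` and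
labeled formulae `w : φ` on the left and on the right. -/
structure LSeq (Fml Var Lab : Type) : Type where
  rel : List (Lab × Lab)
  dom : Multiset (Lab × Var)
  left : Multiset (Lab × Fml)
  right : Multiset (Lab × Fml)

variable {Fml Var Lab : Type} [DecidableEq Lab]

/-- Composition `⊗` of labeled sequents (multiset/list union componentwise). -/
def LSeq.comp (Λ₁ Λ₂ : LSeq Fml Var Lab) : LSeq Fml Var Lab :=
  ⟨Λ₁.rel ++ Λ₂.rel, Λ₁.dom + Λ₂.dom, Λ₁.left + Λ₂.left, Λ₁.right + Λ₂.right⟩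

/-- The translation `𝔏` from nested sequents (rooted at `v`) to labeled tree sequents. -/
def Ltrans (v : Lab) : Nested Fml Var Lab → LSeq Fml Var Lab
  | .node Γ Θ Δ cs =>
    (cs.attach.map (fun c =>
        LSeq.comp ⟨[(v, c.1.1)], 0, 0, 0⟩ (Ltrans c.1.1 c.1.2))).foldr LSeq.comp
      ⟨[], Θ.map (fun x => (v, x)), Γ.map (fun φ => (v, φ)), Δ.map (fun φ => (v, φ))⟩
termination_by Φ => sizeOf Φ
decreasing_by
  have h := List.sizeOf_lt_of_mem c.2
  obtain ⟨⟨a, b⟩, hc⟩ := c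
  simp only [Prod.mk.sizeOf_spec, Nested.node.sizeOf_spec] at h ⊢
  omega

/-- The translation `𝔑` from labeled tree sequents back to nested sequents, computed
by recursion on the tree structure (here implemented with a fuel parameter bounding
the recursion depth): at node `v` it collects the formulae labeled `v` on each side
and the variables `x` with `x ∈ D(v)`, and recursively translates the subtrees rooted
at the children `z` with `vRz`. -/
def Ntrans : ℕ → Lab → LSeq Fml Var Lab → Nested Fml Var Lab
  | 0, v, Λ =>
      .node ((Λ.left.filter (fun p => p.1 = v)).map Prod.snd)
        ((Λ.dom.filter (fun p => p.1 = v)).map Prod.snd)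
        ((Λ.right.filter (fun p => p.1 = v)).map Prod.snd) []
  | n + 1, v, Λ =>
      .node ((Λ.left.filter (fun p => p.1 = v)).map Prod.snd)
        ((Λ.dom.filter (fun p => p.1 = v)).map Prod.snd)
        ((Λ.right.filter (fun p => p.1 = v)).map Prod.snd)
        ((Λ.rel.filter (fun p => p.1 = v)).map (fun p => (p.2, Ntrans n p.2 Λ)))

/-- The height of a nested sequent (number of nestings). -/
def Nested.height : Nested Fml Var Lab → ℕ
  | .node _ _ _ cs => (cs.attach.map (fun c => c.1.2.height)).foldr max 0 + 1
termination_by Φ => sizeOf Φ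
decreasing_by
  have h := List.sizeOf_lt_of_mem c.2
  obtain ⟨⟨a, b⟩, hc⟩ := c
  simp only [Prod.mk.sizeOf_spec, Nested.node.sizeOf_spec] at h ⊢
  omega

/-- The list of all labels occurring in a nested sequent whose root is labeled `w`. -/
def Nested.labels (w : Lab) : Nested Fml Var Lab → List Lab
  | .node _ _ _ cs => w :: (cs.attach.map (fun c => Nested.labels c.1.1 c.1.2)).flatten
termination_by Φ => sizeOf Φ
decreasing_by
  have h := List.sizeOf_lt_of_mem c.2
  obtain ⟨⟨a, b⟩, hc⟩ := c
  simp only [Prod.mk.sizeOf_spec, Nested.node.sizeOf_spec] at h ⊢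
  omega


lemma labels_node (w : Lab) (Γ Δ : Multiset Fml) (Θ : Multiset Var) (cs : List (Lab × Nested Fml Var Lab)) :
    Nested.labels w (.node Γ Θ Δ cs) = w :: (cs.map (fun c => Nested.labels c.1 c.2)).flatten := by
  rw [Nested.labels]
  congr 1
  rw [show (fun (c : {x // x ∈ cs}) => Nested.labels c.1.1 c.1.2) = (fun c => Nested.labels c.1 c.2) ∘ Subtype.val from rfl,
    ← List.map_map, List.attach_map_subtype_val]

lemma height_node (Γ Δ : Multiset Fml) (Θ : Multiset Var) (cs : List (Lab × Nested Fml Var Lab)) :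
    Nested.height (.node Γ Θ Δ cs : Nested Fml Var Lab) = (cs.map (fun c => c.2.height)).foldr max 0 + 1 := by
  rw [Nested.height]
  congr 2
  rw [show (fun (c : {x // x ∈ cs}) => Nested.height c.1.2) = (fun c => Nested.height c.2) ∘ Subtype.val from rfl,
    ← List.map_map, List.attach_map_subtype_val]

set_option linter.unusedSectionVars false

lemma foldr_comp_rel (l : List (LSeq Fml Var Lab)) (b : LSeq Fml Var Lab) :
    (l.foldr LSeq.comp b).rel = (l.map LSeq.rel).flatten ++ b.rel := by
  induction l with
  | nil => simp
  | cons h t ih => simp [LSeq.comp, ih]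

lemma foldr_comp_dom (l : List (LSeq Fml Var Lab)) (b : LSeq Fml Var Lab) :
    (l.foldr LSeq.comp b).dom = (l.map LSeq.dom).sum + b.dom := by
  induction l with
  | nil => simp
  | cons h t ih => simp [LSeq.comp, ih, add_assoc]

lemma foldr_comp_left (l : List (LSeq Fml Var Lab)) (b : LSeq Fml Var Lab) :
    (l.foldr LSeq.comp b).left = (l.map LSeq.left).sum + b.left := by
  induction l with
  | nil => simp
  | cons h t ih => simp [LSeq.comp, ih, add_assoc]

lemma foldr_comp_right (l : List (LSeq Fml Var Lab)) (b : LSeq Fml Var Lab) :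
    (l.foldr LSeq.comp b).right = (l.map LSeq.right).sum + b.right := by
  induction l with
  | nil => simp
  | cons h t ih => simp [LSeq.comp, ih, add_assoc]

lemma attach_map_fst {α : Type} (cs : List (Lab × Nested Fml Var Lab)) (g : Lab × Nested Fml Var Lab → α) :
    cs.attach.map (fun c => g c.1) = cs.map g := by
  rw [show (fun (c : {x // x ∈ cs}) => g c.1) = g ∘ Subtype.val from rfl,
    ← List.map_map, List.attach_map_subtype_val]

lemma Ltrans_rel (w : Lab) (Γ Δ : Multiset Fml) (Θ : Multiset Var) (cs : List (Lab × Nested Fml Var Lab)) :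
    (Ltrans w (.node Γ Θ Δ cs : Nested Fml Var Lab)).rel
      = (cs.map (fun c => (w, c.1) :: (Ltrans c.1 c.2).rel)).flatten := by
  rw [Ltrans, foldr_comp_rel]
  simp only [List.map_map]
  rw [show (LSeq.rel ∘ fun (c : {x // x ∈ cs}) =>
      LSeq.comp ⟨[(w, c.1.1)], 0, 0, 0⟩ (Ltrans c.1.1 c.1.2))
    = (fun c => (w, c.1) :: (Ltrans c.1 c.2).rel) ∘ Subtype.val from rfl,
    ← List.map_map, List.attach_map_subtype_val]
  simp

lemma Ltrans_dom (w : Lab) (Γ Δ : Multiset Fml) (Θ : Multiset Var) (cs : List (Lab × Nested Fml Var Lab)) :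
    (Ltrans w (.node Γ Θ Δ cs : Nested Fml Var Lab)).dom
      = Θ.map (fun x => (w, x)) + (cs.map (fun c => (Ltrans c.1 c.2).dom)).sum := by
  rw [Ltrans, foldr_comp_dom, add_comm]
  congr 1
  simp only [List.map_map]
  rw [show (LSeq.dom ∘ fun (c : {x // x ∈ cs}) =>
      LSeq.comp ⟨[(w, c.1.1)], 0, 0, 0⟩ (Ltrans c.1.1 c.1.2))
    = (fun c => (Ltrans c.1 c.2).dom) ∘ Subtype.val from ?_,
    ← List.map_map, List.attach_map_subtype_val]
  funext c; simp [LSeq.comp]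

lemma Ltrans_left (w : Lab) (Γ Δ : Multiset Fml) (Θ : Multiset Var) (cs : List (Lab × Nested Fml Var Lab)) :
    (Ltrans w (.node Γ Θ Δ cs : Nested Fml Var Lab)).left
      = Γ.map (fun φ => (w, φ)) + (cs.map (fun c => (Ltrans c.1 c.2).left)).sum := by
  rw [Ltrans, foldr_comp_left, add_comm]
  congr 1
  simp only [List.map_map]
  rw [show (LSeq.left ∘ fun (c : {x // x ∈ cs}) =>
      LSeq.comp ⟨[(w, c.1.1)], 0, 0, 0⟩ (Ltrans c.1.1 c.1.2))
    = (fun c => (Ltrans c.1 c.2).left) ∘ Subtype.val from ?_,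
    ← List.map_map, List.attach_map_subtype_val]
  funext c; simp [LSeq.comp]

lemma Ltrans_right (w : Lab) (Γ Δ : Multiset Fml) (Θ : Multiset Var) (cs : List (Lab × Nested Fml Var Lab)) :
    (Ltrans w (.node Γ Θ Δ cs : Nested Fml Var Lab)).right
      = Δ.map (fun φ => (w, φ)) + (cs.map (fun c => (Ltrans c.1 c.2).right)).sum := by
  rw [Ltrans, foldr_comp_right, add_comm]
  congr 1
  simp only [List.map_map]
  rw [show (LSeq.right ∘ fun (c : {x // x ∈ cs}) =>
      LSeq.comp ⟨[(w, c.1.1)], 0, 0, 0⟩ (Ltrans c.1.1 c.1.2))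
    = (fun c => (Ltrans c.1 c.2).right) ∘ Subtype.val from ?_,
    ← List.map_map, List.attach_map_subtype_val]
  funext c; simp [LSeq.comp]

lemma mem_list_sum {α : Type} {l : List (Multiset α)} {x : α} (h : x ∈ l.sum) :
    ∃ s ∈ l, x ∈ s := by
  induction l with
  | nil => simp at h
  | cons a t ih =>
    rw [List.sum_cons, Multiset.mem_add] at h
    rcases h with h | h
    · exact ⟨a, List.mem_cons_self, h⟩
    · obtain ⟨s, hs, hx⟩ := ih h; exact ⟨s, List.mem_cons_of_mem _ hs, hx⟩

lemma sizeOf_child_lt [SizeOf Fml] [SizeOf Var] [SizeOf Lab] {c : Lab × Nested Fml Var Lab}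
    {cs : List (Lab × Nested Fml Var Lab)} (hc : c ∈ cs)
    (Γ Δ : Multiset Fml) (Θ : Multiset Var) :
    sizeOf c.2 < sizeOf (Nested.node Γ Θ Δ cs : Nested Fml Var Lab) := by
  have h := List.sizeOf_lt_of_mem hc
  obtain ⟨a, b⟩ := c
  simp only [Prod.mk.sizeOf_spec, Nested.node.sizeOf_spec] at h ⊢
  omega

lemma mem_labels_self (w : Lab) (Φ : Nested Fml Var Lab) : w ∈ Φ.labels w := by
  obtain ⟨Γ, Θ, Δ, cs⟩ := Φ
  rw [labels_node]
  exact List.mem_cons_self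

lemma le_foldr_max {l : List ℕ} {x : ℕ} (hx : x ∈ l) : x ≤ l.foldr max 0 := by
  induction l with
  | nil => simp at hx
  | cons h t ih =>
    rcases List.mem_cons.1 hx with rfl | hx
    · exact le_max_left _ _
    · exact le_trans (ih hx) (le_max_right _ _)

/-- Lemma A: all labels occurring in the translation belong to the labels of the sequent. -/
lemma Ltrans_mem_labels :
    ∀ (n : ℕ) (Φ : Nested Fml Var Lab), sizeOf Φ ≤ n → ∀ (w : Lab),
      (∀ p ∈ (Ltrans w Φ).rel, p.1 ∈ Φ.labels w ∧ p.2 ∈ Φ.labels w) ∧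
      (∀ p ∈ (Ltrans w Φ).dom, p.1 ∈ Φ.labels w) ∧
      (∀ p ∈ (Ltrans w Φ).left, p.1 ∈ Φ.labels w) ∧
      (∀ p ∈ (Ltrans w Φ).right, p.1 ∈ Φ.labels w) := by
  intro n
  induction n with
  | zero => intro Φ h; obtain ⟨Γ, Θ, Δ, cs⟩ := Φ; simp [Nested.node.sizeOf_spec] at h
  | succ n ih =>
    rintro ⟨Γ, Θ, Δ, cs⟩ hs w
    have hchild : ∀ c ∈ cs, sizeOf c.2 ≤ n := fun c hc =>
      Nat.lt_succ_iff.mp (lt_of_lt_of_le (sizeOf_child_lt hc Γ Δ Θ) hs)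
    have hsub : ∀ c ∈ cs, ∀ a, a ∈ Nested.labels c.1 c.2 →
        a ∈ Nested.labels w (.node Γ Θ Δ cs) := by
      intro c hc a ha
      rw [labels_node]
      exact List.mem_cons_of_mem _ (List.mem_flatten.2 ⟨_, List.mem_map_of_mem hc, ha⟩)
    have hw : w ∈ Nested.labels w (.node Γ Θ Δ cs) := mem_labels_self _ _
    refine ⟨?_, ?_, ?_, ?_⟩
    · intro p hp
      rw [Ltrans_rel] at hp
      obtain ⟨l, hl, hpl⟩ := List.mem_flatten.1 hp
      obtain ⟨c, hc, rfl⟩ := List.mem_map.1 hl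
      rcases List.mem_cons.1 hpl with rfl | hpl
      · exact ⟨hw, hsub c hc _ (mem_labels_self _ _)⟩
      · have := (ih c.2 (hchild c hc) c.1).1 p hpl
        exact ⟨hsub c hc _ this.1, hsub c hc _ this.2⟩
    · intro p hp
      rw [Ltrans_dom] at hp
      rcases Multiset.mem_add.1 hp with hp | hp
      · obtain ⟨x, _, rfl⟩ := Multiset.mem_map.1 hp; exact hw
      · obtain ⟨s, hs', hps⟩ := mem_list_sum hp
        obtain ⟨c, hc, rfl⟩ := List.mem_map.1 hs'
        exact hsub c hc _ ((ih c.2 (hchild c hc) c.1).2.1 p hps)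
    · intro p hp
      rw [Ltrans_left] at hp
      rcases Multiset.mem_add.1 hp with hp | hp
      · obtain ⟨x, _, rfl⟩ := Multiset.mem_map.1 hp; exact hw
      · obtain ⟨s, hs', hps⟩ := mem_list_sum hp
        obtain ⟨c, hc, rfl⟩ := List.mem_map.1 hs'
        exact hsub c hc _ ((ih c.2 (hchild c hc) c.1).2.2.1 p hps)
    · intro p hp
      rw [Ltrans_right] at hp
      rcases Multiset.mem_add.1 hp with hp | hp
      · obtain ⟨x, _, rfl⟩ := Multiset.mem_map.1 hp; exact hw
      · obtain ⟨s, hs', hps⟩ := mem_list_sum hp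
        obtain ⟨c, hc, rfl⟩ := List.mem_map.1 hs'
        exact hsub c hc _ ((ih c.2 (hchild c hc) c.1).2.2.2 p hps)

/-- Lemma B: `Ntrans` only depends on the atoms whose labels lie in a set `S` that
contains `v` and is closed under the relational atoms. -/
lemma Ntrans_congr :
    ∀ (n : ℕ) (S : Lab → Prop) (Λ Λ' : LSeq Fml Var Lab),
      (∀ a, S a → Λ.dom.filter (fun p => p.1 = a) = Λ'.dom.filter (fun p => p.1 = a)) →
      (∀ a, S a → Λ.left.filter (fun p => p.1 = a) = Λ'.left.filter (fun p => p.1 = a)) →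
      (∀ a, S a → Λ.right.filter (fun p => p.1 = a) = Λ'.right.filter (fun p => p.1 = a)) →
      (∀ a, S a → Λ.rel.filter (fun p => p.1 = a) = Λ'.rel.filter (fun p => p.1 = a)) →
      (∀ p ∈ Λ.rel, S p.1 → S p.2) →
      ∀ v, S v → Ntrans n v Λ = Ntrans n v Λ' := by
  intro n
  induction n with
  | zero =>
    intro S Λ Λ' hd hl hr _ _ v hv
    rw [Ntrans, Ntrans, hd v hv, hl v hv, hr v hv]
  | succ n ih =>
    intro S Λ Λ' hd hl hr hrel hcl v hv
    rw [Ntrans, Ntrans, hd v hv, hl v hv, hr v hv, ← hrel v hv]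
    congr 1
    apply List.map_congr_left
    intro p hp
    have hmem := List.mem_filter.1 hp
    have hp1 : p.1 = v := by simpa using hmem.2
    have hS2 : S p.2 := hcl p hmem.1 (hp1 ▸ hv)
    rw [ih S Λ Λ' hd hl hr hrel hcl p.2 hS2]

lemma filter_flatten' {α : Type} (q : α → Bool) (L : List (List α)) :
    L.flatten.filter q = (L.map (List.filter q)).flatten := by
  induction L with
  | nil => simp
  | cons h t ih => simp [List.filter_append, ih]

lemma flatten_map_singleton {α β : Type} (l : List α) (f : α → β) :
    (l.map (fun x => [f x])).flatten = l.map f := by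
  induction l with
  | nil => rfl
  | cons h t ih => simp only [List.map_cons, List.flatten_cons, List.singleton_append, ih]

lemma main_aux : ∀ (m : ℕ) (Φ : Nested Fml Var Lab), sizeOf Φ ≤ m → ∀ (w₀ : Lab),
    (Φ.labels w₀).Nodup → ∀ n, Φ.height ≤ n → Ntrans n w₀ (Ltrans w₀ Φ) = Φ := by
  intro m
  induction m with
  | zero =>
    intro Φ h
    obtain ⟨Γ, Θ, Δ, cs⟩ := Φ
    simp [Nested.node.sizeOf_spec] at h
  | succ m ih =>
    rintro ⟨Γ, Θ, Δ, cs⟩ hs w₀ hnd n hn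
    rw [height_node] at hn
    obtain ⟨k, rfl⟩ : ∃ k, n = k + 1 := ⟨n - 1, by omega⟩
    have hk : ∀ c ∈ cs, c.2.height ≤ k := fun c hc =>
      le_trans (le_foldr_max (List.mem_map_of_mem (f := fun c => c.2.height) hc)) (by omega)
    have hsz : ∀ c ∈ cs, sizeOf c.2 ≤ m := fun c hc =>
      Nat.lt_succ_iff.mp (lt_of_lt_of_le (sizeOf_child_lt hc Γ Δ Θ) hs)
    rw [labels_node, List.nodup_cons] at hnd
    obtain ⟨hw₀, hflat⟩ := hnd
    have hA := fun (c : Lab × Nested Fml Var Lab) (_ : c ∈ cs) =>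
      Ltrans_mem_labels (sizeOf c.2) c.2 le_rfl c.1
    have hnotw : ∀ c ∈ cs, ∀ a ∈ Nested.labels c.1 c.2, ¬ a = w₀ := by
      rintro c hc a ha rfl
      exact hw₀ (List.mem_flatten.2 ⟨_, List.mem_map_of_mem hc, ha⟩)
    rw [Ntrans]
    simp only [Nested.node.injEq]
    have root_self : ∀ {β : Type} (M : Multiset β),
        Multiset.filter (fun p : Lab × β => p.1 = w₀) (M.map (fun x => (w₀, x)))
          = M.map (fun x => (w₀, x)) := by
      intro β M
      apply Multiset.filter_eq_self.2
      intro p hp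
      obtain ⟨x, _, h'⟩ := Multiset.mem_map.1 hp
      exact congrArg Prod.fst h'.symm
    have root_map : ∀ {β : Type} (M : Multiset β),
        (M.map (fun x => (w₀, x))).map Prod.snd = M := by
      intro β M
      rw [Multiset.map_map]
      simp
    refine ⟨?_, ?_, ?_, ?_⟩
    · -- left
      rw [Ltrans_left, Multiset.filter_add, root_self, Multiset.filter_eq_nil.2 ?zl,
        add_zero, root_map]
      case zl =>
        intro p hp
        obtain ⟨s, hs', hps⟩ := mem_list_sum hp
        obtain ⟨c, hc, rfl⟩ := List.mem_map.1 hs'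
        exact hnotw c hc p.1 ((hA c hc).2.2.1 p hps)
    · -- dom
      rw [Ltrans_dom, Multiset.filter_add, root_self, Multiset.filter_eq_nil.2 ?zd,
        add_zero, root_map]
      case zd =>
        intro p hp
        obtain ⟨s, hs', hps⟩ := mem_list_sum hp
        obtain ⟨c, hc, rfl⟩ := List.mem_map.1 hs'
        exact hnotw c hc p.1 ((hA c hc).2.1 p hps)
    · -- right
      rw [Ltrans_right, Multiset.filter_add, root_self, Multiset.filter_eq_nil.2 ?zr,
        add_zero, root_map]
      case zr =>
        intro p hp
        obtain ⟨s, hs', hps⟩ := mem_list_sum hp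
        obtain ⟨c, hc, rfl⟩ := List.mem_map.1 hs'
        exact hnotw c hc p.1 ((hA c hc).2.2.2 p hps)
    · -- children
      have e_rel : ((Ltrans w₀ (Nested.node Γ Θ Δ cs : Nested Fml Var Lab)).rel.filter
          (fun p => decide (p.1 = w₀))) = cs.map (fun c => (w₀, c.1)) := by
        rw [Ltrans_rel, filter_flatten', List.map_map]
        have hseg : ∀ c ∈ cs, ((List.filter (fun p => decide (p.1 = w₀))) ∘
            (fun c => (w₀, c.1) :: (Ltrans c.1 c.2).rel)) c = [(w₀, c.1)] := by
          intro c hc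
          show List.filter _ ((w₀, c.1) :: (Ltrans c.1 c.2).rel) = [(w₀, c.1)]
          rw [List.filter_cons_of_pos (by simp), List.filter_eq_nil_iff.2 ?_]
          intro p hp
          simpa using hnotw c hc p.1 ((hA c hc).1 p hp).1
        rw [List.map_congr_left hseg]
        exact flatten_map_singleton cs (fun c => (w₀, c.1))
      rw [e_rel, List.map_map]
      conv_rhs => rw [← List.map_id cs]
      apply List.map_congr_left
      intro c hc
      show (c.1, Ntrans k c.1 (Ltrans w₀ (Nested.node Γ Θ Δ cs : Nested Fml Var Lab))) = id c
      obtain ⟨l₁, l₂, hcs⟩ := List.append_of_mem hc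
      rw [hcs, List.map_append, List.map_cons, List.flatten_append, List.flatten_cons]
        at hflat hw₀
      rw [List.nodup_append] at hflat
      obtain ⟨hA1, h2, hdisj1⟩ := hflat
      rw [List.nodup_append] at h2
      obtain ⟨hgc, hB1, hdisj2⟩ := h2
      have hanew : ∀ a ∈ Nested.labels c.1 c.2, a ≠ w₀ := by
        rintro a ha rfl
        exact hw₀ (List.mem_append_right _ (List.mem_append_left _ ha))
      have hnotA : ∀ a ∈ Nested.labels c.1 c.2, ∀ d ∈ l₁, a ∉ Nested.labels d.1 d.2 := by
        intro a ha d hd had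
        exact hdisj1 _ (List.mem_flatten.2 ⟨_, List.mem_map_of_mem hd, had⟩)
          _ (List.mem_append_left _ ha) rfl
      have hnotB : ∀ a ∈ Nested.labels c.1 c.2, ∀ d ∈ l₂, a ∉ Nested.labels d.1 d.2 := by
        intro a ha d hd had
        exact hdisj2 _ ha _ (List.mem_flatten.2 ⟨_, List.mem_map_of_mem hd, had⟩) rfl
      have hmem1 : ∀ d ∈ l₁, d ∈ cs := fun d hd => hcs ▸ List.mem_append_left _ hd
      have hmem2 : ∀ d ∈ l₂, d ∈ cs := fun d hd =>
        hcs ▸ List.mem_append_right _ (List.mem_cons_of_mem _ hd)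
      set S : Lab → Prop := fun a => a ∈ Nested.labels c.1 c.2 with hS
      have mdrop : ∀ {β : Type} (a : Lab), S a →
          (∀ f : (Lab × Nested Fml Var Lab) → Multiset (Lab × β),
            (∀ d ∈ cs, ∀ p ∈ f d, p.1 ∈ Nested.labels d.1 d.2) →
            ∀ (M : Multiset β),
            Multiset.filter (fun p : Lab × β => p.1 = a)
              (M.map (fun x => (w₀, x)) + (cs.map f).sum)
              = Multiset.filter (fun p : Lab × β => p.1 = a) (f c)) := by
        intro β a haS f hf M
        rw [hcs, List.map_append, List.map_cons, List.sum_append, List.sum_cons,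
          Multiset.filter_add, Multiset.filter_add, Multiset.filter_add]
        rw [Multiset.filter_eq_nil.2 (fun p hp hpa => by
          obtain ⟨y, _, h'⟩ := Multiset.mem_map.1 hp
          exact hanew a haS (hpa ▸ congrArg Prod.fst h'.symm))]
        rw [(Multiset.filter_eq_nil (s := (List.map f l₁).sum)).2 (fun p hp hpa => by
          obtain ⟨s, hs', hps⟩ := mem_list_sum hp
          obtain ⟨d, hd, rfl⟩ := List.mem_map.1 hs'
          exact hnotA a haS d hd (hpa ▸ hf d (hmem1 d hd) p hps))]
        rw [(Multiset.filter_eq_nil (s := (List.map f l₂).sum)).2 (fun p hp hpa => by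
          obtain ⟨s, hs', hps⟩ := mem_list_sum hp
          obtain ⟨d, hd, rfl⟩ := List.mem_map.1 hs'
          exact hnotB a haS d hd (hpa ▸ hf d (hmem2 d hd) p hps))]
        simp
      have key : Ntrans k c.1 (Ltrans w₀ (Nested.node Γ Θ Δ cs : Nested Fml Var Lab))
          = Ntrans k c.1 (Ltrans c.1 c.2) := by
        apply Ntrans_congr k S
        · intro a haS
          rw [Ltrans_dom]
          exact mdrop a haS _ (fun d hd p hp => (hA d hd).2.1 p hp) Θ
        · intro a haS
          rw [Ltrans_left]
          exact mdrop a haS _ (fun d hd p hp => (hA d hd).2.2.1 p hp) Γ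
        · intro a haS
          rw [Ltrans_right]
          exact mdrop a haS _ (fun d hd p hp => (hA d hd).2.2.2 p hp) Δ
        · intro a haS
          rw [Ltrans_rel, hcs, List.map_append, List.map_cons, List.flatten_append,
            List.flatten_cons, List.filter_append, List.filter_append]
          rw [(List.filter_eq_nil_iff (l := (List.map (fun c => (w₀, c.1) :: (Ltrans c.1 c.2).rel) l₁).flatten)).2 (fun p hp => by
            obtain ⟨s, hs', hps⟩ := List.mem_flatten.1 hp
            obtain ⟨d, hd, rfl⟩ := List.mem_map.1 hs'
            simp only [decide_eq_true_eq]
            rcases List.mem_cons.1 hps with rfl | hps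
            · exact fun hba => hanew a haS (hba ▸ rfl)
            · exact fun hpa => hnotA a haS d hd (hpa ▸ ((hA d (hmem1 d hd)).1 p hps).1))]
          rw [List.filter_cons_of_neg (by
            simp only [decide_eq_true_eq]
            exact fun h => hanew a haS h.symm)]
          rw [(List.filter_eq_nil_iff (l := (List.map (fun c => (w₀, c.1) :: (Ltrans c.1 c.2).rel) l₂).flatten)).2 (fun p hp => by
            obtain ⟨s, hs', hps⟩ := List.mem_flatten.1 hp
            obtain ⟨d, hd, rfl⟩ := List.mem_map.1 hs'
            simp only [decide_eq_true_eq]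
            rcases List.mem_cons.1 hps with rfl | hps
            · exact fun hba => hanew a haS (hba ▸ rfl)
            · exact fun hpa => hnotB a haS d hd (hpa ▸ ((hA d (hmem2 d hd)).1 p hps).1))]
          simp
        · intro p hp hp1
          rw [Ltrans_rel, hcs, List.map_append, List.map_cons, List.flatten_append,
            List.flatten_cons] at hp
          rcases List.mem_append.1 hp with hp | hp
          · obtain ⟨s, hs', hps⟩ := List.mem_flatten.1 hp
            obtain ⟨d, hd, rfl⟩ := List.mem_map.1 hs'
            rcases List.mem_cons.1 hps with rfl | hps
            · exact absurd rfl (hanew _ hp1)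
            · exact absurd ((hA d (hmem1 d hd)).1 p hps).1 (hnotA _ hp1 d hd)
          rcases List.mem_append.1 hp with hp | hp
          · rcases List.mem_cons.1 hp with rfl | hps
            · exact absurd rfl (hanew _ hp1)
            · exact ((hA c hc).1 p hps).2
          · obtain ⟨s, hs', hps⟩ := List.mem_flatten.1 hp
            obtain ⟨d, hd, rfl⟩ := List.mem_map.1 hs'
            rcases List.mem_cons.1 hps with rfl | hps
            · exact absurd rfl (hanew _ hp1)
            · exact absurd ((hA d (hmem2 d hd)).1 p hps).1 (hnotB _ hp1 d hd)
        · exact mem_labels_self c.1 c.2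
      rw [key, ih c.2 (hsz c hc) c.1 hgc k (hk c hc)]
      rfl

/-- the translations are mutually inverse on nested sequents:
for every nested sequent `Φ` (with pairwise distinct labels, root label `w₀`),
`𝔑(𝔏(Φ)) = Φ`. -/
theorem Ntrans_Ltrans (w₀ : Lab) (Φ : Nested Fml Var Lab)
    (hnd : (Φ.labels w₀).Nodup) :
    ∀ n : ℕ, Φ.height ≤ n → Ntrans n w₀ (Ltrans w₀ Φ) = Φ := by
  exact fun n hn => main_aux (sizeOf Φ) Φ le_rfl w₀ hnd n hn
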